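/- Let U ⊆ ℝ² be an open set, K ⊆ U a compact set, and C > 0. Then the set M of pairs (i,j) ∈ ℤ² such that there exists d ∈ ℝ with the affine function ix + jy + d nonnegative on U and with value at most C at some point of K, is finite (assuming U ≠ ℝ², so that the distance R from K to ℝ²\U is positive; the bound is i² + j² ≤ C²/R²). -/

import Mathlib

/-- The set of integer slopes `(i,j)` admitting a constant `d` such that the affine
function `ix+jy+d` is nonnegative on the open set `U` and takes a value `≤ C`
somewhere on the compact set `K ⊆ U` is finite (assuming `U ≠ ℝ²`). -/
theorem stmt_0 (U : Set (ℝ × ℝ)) (hU : IsOpen U) (K : Set (ℝ × ℝ))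
    (hK : IsCompact K) (hKU : K ⊆ U) (hUne : U ≠ Set.univ) (C : ℝ) (hC : 0 < C) :
    {ij : ℤ × ℤ | ∃ d : ℝ,
      (∀ p ∈ U, 0 ≤ (ij.1 : ℝ) * p.1 + (ij.2 : ℝ) * p.2 + d) ∧
      (∃ p ∈ K, (ij.1 : ℝ) * p.1 + (ij.2 : ℝ) * p.2 + d ≤ C)}.Finite := by
  obtain ⟨δ, hδ, hth⟩ := hK.exists_thickening_subset_open hU hKU
  set n : ℤ := ⌈2 * C / δ⌉ with hn
  have hBpos : 0 < 2 * C / δ := by positivity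
  have hnR : (2 : ℝ) * C / δ ≤ (n : ℝ) := Int.le_ceil _
  apply Set.Finite.subset (Set.finite_Icc (-n, -n) (n, n))
  rintro ⟨i, j⟩ ⟨d, hpos, p, hpK, hpC⟩
  -- Key claim: |i| ≤ 2C/δ and |j| ≤ 2C/δ
  have key : |(i : ℝ)| ≤ 2 * C / δ ∧ |(j : ℝ)| ≤ 2 * C / δ := by
    set m : ℝ := max |(i : ℝ)| |(j : ℝ)| with hm
    have hm0 : 0 ≤ m := le_trans (abs_nonneg _) (le_max_left _ _)
    rcases eq_or_lt_of_le hm0 with hmz | hmp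
    · have h1 : |(i : ℝ)| ≤ m := le_max_left _ _
      have h2 : |(j : ℝ)| ≤ m := le_max_right _ _
      constructor <;> linarith [hmz.le, hBpos.le]
    · -- main case
      set t : ℝ := δ / (2 * m) with ht
      have htpos : 0 < t := by positivity
      have hq : (p.1 - t * i, p.2 - t * j) ∈ U := by
        apply hth
        rw [Metric.mem_thickening_iff]
        refine ⟨p, hpK, ?_⟩
        have hd1 : dist (p.1 - t * (i : ℝ)) p.1 = t * |(i : ℝ)| := by
          rw [Real.dist_eq]
          have h : p.1 - t * (i : ℝ) - p.1 = -(t * i) := by ring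
          rw [h, abs_neg, abs_mul, abs_of_nonneg htpos.le]
        have hd2 : dist (p.2 - t * (j : ℝ)) p.2 = t * |(j : ℝ)| := by
          rw [Real.dist_eq]
          have h : p.2 - t * (j : ℝ) - p.2 = -(t * j) := by ring
          rw [h, abs_neg, abs_mul, abs_of_nonneg htpos.le]
        have : dist ((p.1 - t * i, p.2 - t * j) : ℝ × ℝ) p
            = max (t * |(i : ℝ)|) (t * |(j : ℝ)|) := by
          rw [Prod.dist_eq]; rw [hd1, hd2]
        rw [this, ← mul_max_of_nonneg _ _ htpos.le]
        have : t * m = δ / 2 := by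
          field_simp [ht]
          rw [ht, div_mul_eq_mul_div, div_mul_eq_mul_div, div_eq_iff (by positivity)]; ring
        rw [← hm, this]
        linarith
      have h0 : 0 ≤ (i : ℝ) * (p.1 - t * i) + (j : ℝ) * (p.2 - t * j) + d := hpos _ hq
      have hpC' : (i : ℝ) * p.1 + (j : ℝ) * p.2 + d ≤ C := hpC
      have hsum : t * ((i : ℝ) ^ 2 + (j : ℝ) ^ 2) ≤ C := by nlinarith
      have hm2 : m ^ 2 ≤ (i : ℝ) ^ 2 + (j : ℝ) ^ 2 := by
        rcases max_cases |(i : ℝ)| |(j : ℝ)| with ⟨h1, _⟩ | ⟨h1, _⟩ <;>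
          rw [← hm] at h1 <;> rw [h1, sq_abs] <;> nlinarith
      have htm : t * m = δ / 2 := by
        field_simp [ht]; rw [ht, div_mul_eq_mul_div, div_mul_eq_mul_div, div_eq_iff (by positivity)]; ring
      have hmle : m ≤ 2 * C / δ := by
        rw [le_div_iff₀ hδ]
        nlinarith [mul_le_mul_of_nonneg_left hm2 htpos.le]
      exact ⟨le_trans (le_max_left _ _) hmle, le_trans (le_max_right _ _) hmle⟩
  obtain ⟨hi, hj⟩ := key
  rw [abs_le] at hi hj
  have hiu : i ≤ n := by exact_mod_cast hi.2.trans hnR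
  have hju : j ≤ n := by exact_mod_cast hj.2.trans hnR
  have hil : -n ≤ i := by
    have : -(n : ℝ) ≤ (i : ℝ) := le_trans (by linarith) hi.1
    exact_mod_cast this
  have hjl : -n ≤ j := by
    have : -(n : ℝ) ≤ (j : ℝ) := le_trans (by linarith) hj.1
    exact_mod_cast this
  simp [Set.mem_Icc, Prod.le_def, hiu, hju, hil, hjl]
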